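/- Let β ∈ (π/2, π) and A ∈ (0, 1) satisfy tan β > −A/√(1 − A²). For σ ∈ (0, √(1 − A²)) sufficiently close to √(1 − A²), define λ(σ) = (A cos β + σ sin β)/(1 − A² − σ²), a(σ) = √( ((2A² + 2σ² − 1) A cos β + σ sin β)/(A cos β + σ sin β) ), k(σ) = 1/√(1 + 4λ(σ)² a(σ)²), θ̄₁(σ) = arcsin(A/√(A² + σ²)) − β, z̄(σ) = A·arccosh(√(A² + σ²)/A), and G(σ) = −2 λ(σ) k(σ) · [ z̄(σ) − (1/(2λ(σ))) ∫_{θ̄₁(σ)}^{π} ( sin²x / √(sin²x + 4λ(σ)² a(σ)²) − sin x ) dx ]. Then all of these quantities are well defined for σ in a left neighborhood of √(1 − A²), and lim_{σ → √(1−A²)⁻} G(σ) = A·arccosh(1/A) > 0. -/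

import Mathlib

set_option maxHeartbeats 2000000


/-- The inverse hyperbolic cosine, `arcosh : [1,∞) → [0,∞)`. -/
noncomputable def arcosh (x : ℝ) : ℝ := Real.log (x + Real.sqrt (x ^ 2 - 1))

/-- Evaluation of `G(σ) = −2λk·z₁(π)` along the upper boundary `σ → √(1 − A²)⁻` of the
parameter region: all quantities are well defined in a left neighborhood, and the
limit of `G` is `A·arcosh(1/A) > 0`. -/
theorem G_upper_limit (β A : ℝ)
    (hβ : β ∈ Set.Ioo (Real.pi / 2) Real.pi) (hA : A ∈ Set.Ioo (0:ℝ) 1)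
    (htan : Real.tan β > -A / Real.sqrt (1 - A ^ 2))
    (lam a k θ1 zbar G : ℝ → ℝ)
    (hlam : ∀ σ, lam σ = (A * Real.cos β + σ * Real.sin β) / (1 - A ^ 2 - σ ^ 2))
    (ha : ∀ σ, a σ =
      Real.sqrt (((2 * A ^ 2 + 2 * σ ^ 2 - 1) * A * Real.cos β + σ * Real.sin β)
        / (A * Real.cos β + σ * Real.sin β)))
    (hk : ∀ σ, k σ = 1 / Real.sqrt (1 + 4 * (lam σ) ^ 2 * (a σ) ^ 2))
    (hθ1 : ∀ σ, θ1 σ = Real.arcsin (A / Real.sqrt (A ^ 2 + σ ^ 2)) - β)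
    (hzbar : ∀ σ, zbar σ = A * arcosh (Real.sqrt (A ^ 2 + σ ^ 2) / A))
    (hG : ∀ σ, G σ = -2 * lam σ * k σ *
      (zbar σ - (1 / (2 * lam σ)) *
        ∫ x in (θ1 σ)..Real.pi,
          ((Real.sin x) ^ 2 / Real.sqrt ((Real.sin x) ^ 2 + 4 * (lam σ) ^ 2 * (a σ) ^ 2)
            - Real.sin x))) :
    (∃ δ > 0, ∀ σ : ℝ,
      Real.sqrt (1 - A ^ 2) - δ < σ → σ < Real.sqrt (1 - A ^ 2) →
      0 < 1 - A ^ 2 - σ ^ 2 ∧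
      A * Real.cos β + σ * Real.sin β < 0 ∧
      lam σ < 0 ∧
      0 < ((2 * A ^ 2 + 2 * σ ^ 2 - 1) * A * Real.cos β + σ * Real.sin β)
          / (A * Real.cos β + σ * Real.sin β) ∧
      0 < a σ) ∧
    Filter.Tendsto G
      (nhdsWithin (Real.sqrt (1 - A ^ 2)) (Set.Iio (Real.sqrt (1 - A ^ 2))))
      (nhds (A * arcosh (1 / A))) ∧
    0 < A * arcosh (1 / A) := by
  
  obtain ⟨hβ1, hβ2⟩ := hβ
  obtain ⟨hA0, hA1⟩ := hA
  set s0 := Real.sqrt (1 - A ^ 2) with hs0def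
  have hA2 : (0:ℝ) < 1 - A ^ 2 := by nlinarith
  have hs0pos : 0 < s0 := Real.sqrt_pos.mpr hA2
  have hs0sq : s0 ^ 2 = 1 - A ^ 2 := Real.sq_sqrt hA2.le
  have hcosβ : Real.cos β < 0 :=
    Real.cos_neg_of_pi_div_two_lt_of_lt hβ1 (by linarith [Real.pi_pos])
  have hsinβ : 0 < Real.sin β :=
    Real.sin_pos_of_pos_of_lt_pi (lt_trans (by positivity) hβ1) hβ2
  -- the key sign fact at σ = s0
  have hc : A * Real.cos β + s0 * Real.sin β < 0 := by
    have h : -A / s0 < Real.sin β / Real.cos β := by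
      rw [← Real.tan_eq_sin_div_cos]; exact htan
    have hmul := mul_lt_mul_of_neg_right h (mul_neg_of_neg_of_pos hcosβ hs0pos)
    have hcne : Real.cos β ≠ 0 := ne_of_lt hcosβ
    have hs0ne : s0 ≠ 0 := ne_of_gt hs0pos
    have l1 : Real.sin β / Real.cos β * (Real.cos β * s0) = Real.sin β * s0 := by
      field_simp
    have l2 : -A / s0 * (Real.cos β * s0) = -(A * Real.cos β) := by
      field_simp
    rw [l1, l2] at hmul
    linarith
  set l := nhdsWithin s0 (Set.Iio s0) with hldef
  set D : ℝ → ℝ := fun σ => A * Real.cos β + σ * Real.sin β with hDdef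
  set N : ℝ → ℝ := fun σ => (2 * A ^ 2 + 2 * σ ^ 2 - 1) * A * Real.cos β + σ * Real.sin β
    with hNdef
  set den : ℝ → ℝ := fun σ => 1 - A ^ 2 - σ ^ 2 with hdendef
  have hlel : l ≤ nhds s0 := nhdsWithin_le_nhds
  -- eventual facts
  have hElt : ∀ᶠ σ in l, σ < s0 := eventually_mem_nhdsWithin
  have hEgt : ∀ᶠ σ in l, 0 < σ := (eventually_gt_nhds hs0pos).filter_mono hlel
  have hEden : ∀ᶠ σ in l, 0 < den σ := by
    filter_upwards [hElt, hEgt] with σ h1 h2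
    have : σ ^ 2 < s0 ^ 2 := by nlinarith
    simp only [hdendef]; nlinarith [hs0sq]
  have hDten : Filter.Tendsto D l (nhds (A * Real.cos β + s0 * Real.sin β)) :=
    ((continuous_const.add (continuous_id.mul continuous_const)).tendsto s0).mono_left hlel
  have hED : ∀ᶠ σ in l, D σ < 0 := hDten.eventually (eventually_lt_nhds hc)
  have hElam : ∀ᶠ σ in l, lam σ < 0 := by
    filter_upwards [hED, hEden] with σ h1 h2
    rw [hlam]; exact div_neg_of_neg_of_pos h1 h2
  have hNten : Filter.Tendsto N l (nhds (A * Real.cos β + s0 * Real.sin β)) := by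
    have hcont : Continuous N := by fun_prop
    have hval : N s0 = A * Real.cos β + s0 * Real.sin β := by
      simp only [hNdef]; rw [hs0sq]; ring
    exact (hval ▸ hcont.tendsto s0).mono_left hlel
  have hratio : Filter.Tendsto (fun σ => N σ / D σ) l (nhds 1) := by
    have := hNten.div hDten (ne_of_lt hc)
    rwa [div_self (ne_of_lt hc)] at this
  have hEratio : ∀ᶠ σ in l, 0 < N σ / D σ := hratio.eventually (eventually_gt_nhds one_pos)
  have hEa : ∀ᶠ σ in l, 0 < a σ := by
    filter_upwards [hEratio] with σ h1
    rw [ha]; exact Real.sqrt_pos.mpr h1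
  -- limit of a
  have haten : Filter.Tendsto a l (nhds 1) := by
    have h1 : Filter.Tendsto (fun σ => Real.sqrt (N σ / D σ)) l (nhds 1) := by
      have := (Real.continuous_sqrt.tendsto 1).comp hratio
      rwa [Real.sqrt_one] at this
    exact h1.congr fun σ => (ha σ).symm
  -- lam tends to atBot
  have hdenten : Filter.Tendsto den l (nhdsWithin 0 (Set.Ioi 0)) := by
    rw [tendsto_nhdsWithin_iff]
    constructor
    · have hcont : Continuous den := by fun_prop
      have hval : den s0 = 0 := by simp only [hdendef]; rw [hs0sq]; ring
      exact (hval ▸ hcont.tendsto s0).mono_left hlel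
    · exact hEden
  have hinvden : Filter.Tendsto (fun σ => (den σ)⁻¹) l Filter.atTop :=
    tendsto_inv_nhdsGT_zero.comp hdenten
  have hlamBot : Filter.Tendsto lam l Filter.atBot := by
    have : Filter.Tendsto (fun σ => D σ * (den σ)⁻¹) l Filter.atBot :=
      Filter.Tendsto.neg_mul_atTop hc hDten hinvden
    exact this.congr fun σ => by rw [hlam, div_eq_mul_inv]
  have hEne : ∀ᶠ σ in l, lam σ ≠ 0 := hElam.mono fun σ h => ne_of_lt h
  -- 4 λ² a² → atTop
  have hlamsq : Filter.Tendsto (fun σ => 4 * (lam σ) ^ 2) l Filter.atTop := by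
    have h1 : Filter.Tendsto (fun σ => lam σ * lam σ) l Filter.atTop :=
      hlamBot.atBot_mul_atBot₀ hlamBot
    have h2 := h1.const_mul_atTop (show (0:ℝ) < 4 by norm_num)
    exact h2.congr fun σ => by ring
  have hStop : Filter.Tendsto (fun σ => 1 + 4 * (lam σ) ^ 2 * (a σ) ^ 2) l Filter.atTop := by
    have ha2 : Filter.Tendsto (fun σ => (a σ) ^ 2) l (nhds 1) := by
      have := haten.mul haten
      rw [mul_one] at this
      exact this.congr fun σ => (sq (a σ)).symm
    have := (hlamsq.atTop_mul_pos one_pos ha2)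
    have h3 := Filter.tendsto_atTop_add_const_left l 1 this
    exact h3.congr fun σ => by ring
  -- k → 0
  have hkten : Filter.Tendsto k l (nhds 0) := by
    have h1 : Filter.Tendsto (fun σ => (1 + 4 * (lam σ) ^ 2 * (a σ) ^ 2)⁻¹) l (nhds 0) :=
      tendsto_inv_atTop_zero.comp hStop
    have h2 : Filter.Tendsto (fun σ => Real.sqrt (1 + 4 * (lam σ) ^ 2 * (a σ) ^ 2)⁻¹) l
        (nhds 0) := by
      have := (Real.continuous_sqrt.tendsto 0).comp h1
      rwa [Real.sqrt_zero] at this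
    refine h2.congr fun σ => ?_
    rw [Real.sqrt_inv, hk, one_div]
  have hknonneg : ∀ σ, 0 ≤ k σ := fun σ => by
    rw [hk]; positivity
  -- f := -2 λ k  → 1
  have hften : Filter.Tendsto (fun σ => -2 * lam σ * k σ) l (nhds 1) := by
    have hneglam : Filter.Tendsto (fun σ => -lam σ) l Filter.atTop :=
      Filter.tendsto_neg_atBot_atTop.comp hlamBot
    have hinvlam : Filter.Tendsto (fun σ => (lam σ)⁻¹) l (nhds 0) := by
      have h0 := hneglam.inv_tendsto_atTop
      have h1 := h0.neg
      rw [neg_zero] at h1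
      exact h1.congr fun σ => by
        show -(-lam σ)⁻¹ = (lam σ)⁻¹
        rw [inv_neg, neg_neg]
    have hr' : Filter.Tendsto (fun σ => 4 / ((lam σ)⁻¹ ^ 2 + 4 * (a σ) ^ 2)) l (nhds 1) := by
      have hden2 : Filter.Tendsto (fun σ => (lam σ)⁻¹ ^ 2 + 4 * (a σ) ^ 2) l (nhds 4) := by
        have h1 := (hinvlam.mul hinvlam)
        rw [mul_zero] at h1
        have h2 := haten.mul haten
        rw [mul_one] at h2
        have := h1.add ((h2.const_mul 4))
        have heq : (0:ℝ) + 4 * 1 = 4 := by norm_num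
        rw [heq] at this
        exact this.congr fun σ => by ring
      have := (tendsto_const_nhds (x := (4:ℝ))).div hden2 (by norm_num)
      have heq : (4:ℝ) / 4 = 1 := by norm_num
      rwa [heq] at this
    have hrten : Filter.Tendsto
        (fun σ => 4 * (lam σ) ^ 2 / (1 + 4 * (lam σ) ^ 2 * (a σ) ^ 2)) l (nhds 1) := by
      refine hr'.congr' ?_
      filter_upwards [hEne] with σ hne
      have hS : (0:ℝ) < 1 + 4 * (lam σ) ^ 2 * (a σ) ^ 2 := by positivity
      field_simp
    have hsq : Filter.Tendsto
        (fun σ => Real.sqrt (4 * (lam σ) ^ 2 / (1 + 4 * (lam σ) ^ 2 * (a σ) ^ 2))) l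
        (nhds 1) := by
      have := (Real.continuous_sqrt.tendsto 1).comp hrten
      rwa [Real.sqrt_one] at this
    refine hsq.congr' ?_
    filter_upwards [hElam] with σ hneg
    have hS : (0:ℝ) < 1 + 4 * (lam σ) ^ 2 * (a σ) ^ 2 := by positivity
    rw [Real.sqrt_div (by positivity), show (4:ℝ) * (lam σ) ^ 2 = (-2 * lam σ) ^ 2 by ring,
      Real.sqrt_sq (by linarith), hk, mul_one_div]
    ring_nf
  -- zbar → A * arcosh (1/A)
  have hzten : Filter.Tendsto zbar l (nhds (A * arcosh (1 / A))) := by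
    have hg : Filter.Tendsto (fun σ => Real.sqrt (A ^ 2 + σ ^ 2) / A) l (nhds (1 / A)) := by
      have hcont : Continuous fun σ : ℝ => Real.sqrt (A ^ 2 + σ ^ 2) / A := by fun_prop
      have hval : Real.sqrt (A ^ 2 + s0 ^ 2) / A = 1 / A := by
        rw [hs0sq, show A ^ 2 + (1 - A ^ 2) = 1 by ring, Real.sqrt_one]
      exact (hval ▸ hcont.tendsto s0).mono_left hlel
    have hac : ContinuousAt arcosh (1 / A) := by
      have hpos : (0:ℝ) < 1 / A + Real.sqrt ((1 / A) ^ 2 - 1) := by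
        have : (0:ℝ) < 1 / A := by positivity
        have := Real.sqrt_nonneg ((1 / A) ^ 2 - 1)
        linarith
      have hin : ContinuousAt (fun x : ℝ => x + Real.sqrt (x ^ 2 - 1)) (1 / A) := by
        fun_prop
      exact hin.log (ne_of_gt hpos)
    have := (hac.tendsto.comp hg).const_mul A
    exact this.congr fun σ => by rw [hzbar]; rfl
  -- bound on the integral
  set I : ℝ → ℝ := fun σ => ∫ x in (θ1 σ)..Real.pi,
      ((Real.sin x) ^ 2 / Real.sqrt ((Real.sin x) ^ 2 + 4 * (lam σ) ^ 2 * (a σ) ^ 2)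
        - Real.sin x) with hIdef
  have hIbound : ∀ σ, |I σ| ≤ 20 := by
    intro σ
    have hpt : ∀ x ∈ Set.uIoc (θ1 σ) Real.pi,
        ‖(Real.sin x) ^ 2 / Real.sqrt ((Real.sin x) ^ 2 + 4 * (lam σ) ^ 2 * (a σ) ^ 2)
          - Real.sin x‖ ≤ 2 := by
      intro x _
      have hM : (0:ℝ) ≤ 4 * (lam σ) ^ 2 * (a σ) ^ 2 := by positivity
      set t := (Real.sin x) ^ 2 / Real.sqrt ((Real.sin x) ^ 2 + 4 * (lam σ) ^ 2 * (a σ) ^ 2)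
        with htdef
      have ht0 : 0 ≤ t := by positivity
      have ht1 : t ≤ 1 := by
        apply div_le_one_of_le₀ _ (Real.sqrt_nonneg _)
        have h1 : |Real.sin x| ≤ Real.sqrt ((Real.sin x) ^ 2 + 4 * (lam σ) ^ 2 * (a σ) ^ 2) := by
          rw [← Real.sqrt_sq_eq_abs]
          exact Real.sqrt_le_sqrt (by linarith)
        have h2 : (Real.sin x) ^ 2 ≤ |Real.sin x| := by
          nlinarith [abs_nonneg (Real.sin x), Real.abs_sin_le_one x, sq_abs (Real.sin x)]
        linarith
      have hs : |Real.sin x| ≤ 1 := Real.abs_sin_le_one x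
      rw [Real.norm_eq_abs]
      calc |t - Real.sin x| ≤ |t| + |Real.sin x| := abs_sub _ _
        _ ≤ 1 + 1 := by
            have : |t| = t := abs_of_nonneg ht0
            rw [this]; linarith
        _ = 2 := by norm_num
    have h1 := intervalIntegral.norm_integral_le_of_norm_le_const hpt
    rw [Real.norm_eq_abs] at h1
    have hθ : |Real.pi - θ1 σ| ≤ 10 := by
      rw [hθ1]
      have h2 := Real.arcsin_le_pi_div_two (A / Real.sqrt (A ^ 2 + σ ^ 2))
      have h3 := Real.neg_pi_div_two_le_arcsin (A / Real.sqrt (A ^ 2 + σ ^ 2))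
      have hpi := Real.pi_le_four
      have hpi0 := Real.pi_pos
      rw [abs_le]; constructor <;> nlinarith
    calc |I σ| ≤ 2 * |Real.pi - θ1 σ| := h1
      _ ≤ 2 * 10 := by
          have := abs_nonneg (Real.pi - θ1 σ)
          nlinarith
      _ = 20 := by norm_num
  have hkI : Filter.Tendsto (fun σ => k σ * I σ) l (nhds 0) := by
    have hg : Filter.Tendsto (fun σ => 20 * k σ) l (nhds 0) := by
      have := hkten.const_mul (20:ℝ)
      rwa [mul_zero] at this
    refine squeeze_zero_norm (fun σ => ?_) hg
    rw [Real.norm_eq_abs, abs_mul, abs_of_nonneg (hknonneg σ)]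
    have := hIbound σ
    nlinarith [hknonneg σ, abs_nonneg (I σ)]
  -- combine
  have hGten : Filter.Tendsto G l (nhds (A * arcosh (1 / A))) := by
    have htarget : Filter.Tendsto (fun σ => -2 * lam σ * k σ * zbar σ + k σ * I σ) l
        (nhds (1 * (A * arcosh (1 / A)) + 0)) := (hften.mul hzten).add hkI
    rw [one_mul, add_zero] at htarget
    refine htarget.congr' ?_
    filter_upwards [hEne] with σ hne
    have h2 : (2:ℝ) * lam σ ≠ 0 := by
      simp [hne]
    have key : -2 * lam σ * k σ * (1 / (2 * lam σ)) = -k σ := by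
      field_simp
    simp only [hIdef]
    rw [hG, mul_sub]
    rw [show -2 * lam σ * k σ *
        ((1 / (2 * lam σ)) * ∫ x in (θ1 σ)..Real.pi,
          ((Real.sin x) ^ 2 / Real.sqrt ((Real.sin x) ^ 2 + 4 * (lam σ) ^ 2 * (a σ) ^ 2)
            - Real.sin x)) =
        (-2 * lam σ * k σ * (1 / (2 * lam σ))) * ∫ x in (θ1 σ)..Real.pi,
          ((Real.sin x) ^ 2 / Real.sqrt ((Real.sin x) ^ 2 + 4 * (lam σ) ^ 2 * (a σ) ^ 2)
            - Real.sin x) from by ring, key]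
    ring
  have hposfin : 0 < A * arcosh (1 / A) := by
    apply mul_pos hA0
    unfold arcosh
    apply Real.log_pos
    have h1 : (1:ℝ) < 1 / A := by rw [lt_div_iff₀ hA0]; linarith
    have := Real.sqrt_nonneg ((1 / A) ^ 2 - 1)
    linarith
  refine ⟨?_, hGten, hposfin⟩
  -- first conjunct
  have hEall : ∀ᶠ σ in l, 0 < 1 - A ^ 2 - σ ^ 2 ∧
      A * Real.cos β + σ * Real.sin β < 0 ∧ lam σ < 0 ∧
      0 < ((2 * A ^ 2 + 2 * σ ^ 2 - 1) * A * Real.cos β + σ * Real.sin β)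
          / (A * Real.cos β + σ * Real.sin β) ∧ 0 < a σ := by
    filter_upwards [hEden, hED, hElam, hEratio, hEa] with σ h1 h2 h3 h4 h5
    exact ⟨h1, h2, h3, h4, h5⟩
  rw [Filter.eventually_iff, hldef, mem_nhdsLT_iff_exists_Ioo_subset] at hEall
  obtain ⟨a', ha', hsub⟩ := hEall
  refine ⟨s0 - a', by simpa using ha', fun σ hσ1 hσ2 => hsub ⟨by linarith, hσ2⟩⟩
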